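/- For every sufficiently small d₀ ∈ (0,1), every ε > 0 sufficiently small in terms of d₀, and every real K ≥ 1, there exists an integer m₀ = m₀(ε, d₀, K) such that for all d ≥ d₀ the following holds: if G is a bipartite graph with vertex classes A and B of size |A| = |B| = m ≥ m₀ which is ε-regular of density d, then G contains ⌊K⌋ pairwise edge-disjoint spanning subgraphs S₁, …, S_⌊K⌋ such that each S_i is [ε, 4ε/K]-regular and has density in the interval [(d − 2ε)/K, (d + 2ε)/K]. -/

import Mathlib

set_option maxHeartbeats 1000000


open scoped Classical

/-- Number of edges of a bipartite graph `E ⊆ α × β` between `X ⊆ α` and `Y ⊆ β`. -/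
noncomputable def eBip {α β : Type*} (E : Finset (α × β)) (X : Finset α) (Y : Finset β) : ℕ :=
  (E.filter fun e => e.1 ∈ X ∧ e.2 ∈ Y).card

/-- Density of a bipartite graph between `X` and `Y`. -/
noncomputable def densBip {α β : Type*} (E : Finset (α × β)) (X : Finset α) (Y : Finset β) : ℝ :=
  (eBip E X Y : ℝ) / ((X.card : ℝ) * (Y.card : ℝ))

/-- `E` (with vertex classes the whole of `α` and `β`) is `[ε,ε']`-regular. -/
def IsRegularBip {α β : Type*} [Fintype α] [Fintype β] (E : Finset (α × β))
    (ε ε' : ℝ) : Prop :=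
  ∀ X : Finset α, ∀ Y : Finset β,
    ε * (Fintype.card α : ℝ) ≤ (X.card : ℝ) → ε * (Fintype.card β : ℝ) ≤ (Y.card : ℝ) →
    |densBip E Finset.univ Finset.univ - densBip E X Y| < ε'

open Finset Real

lemma exp_le_quad {l : ℝ} (h0 : 0 ≤ l) (h2 : l ≤ 1/2) :
    Real.exp l ≤ 1 + l + 2 * l ^ 2 := by
  have h1 : 1 - l ≤ Real.exp (-l) := by
    have := Real.add_one_le_exp (-l); linarith
  have key : Real.exp l * Real.exp (-l) = 1 := by
    rw [← Real.exp_add]; simp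
  nlinarith [Real.exp_pos l, Real.exp_pos (-l)]

lemma exp_neg_le_quad {l : ℝ} (h0 : 0 ≤ l) :
    Real.exp (-l) ≤ 1 - l + l ^ 2 := by
  have h1 : l + 1 ≤ Real.exp l := Real.add_one_le_exp l
  have key : Real.exp l * Real.exp (-l) = 1 := by
    rw [← Real.exp_add]; simp
  nlinarith [Real.exp_pos l, Real.exp_pos (-l)]

section cnt
variable {γ V : Type*} [Fintype γ] [Fintype V]

noncomputable def cnt (R : Finset γ) (T : Finset V) (g : γ → V) : ℕ :=
  (R.filter fun e => g e ∈ T).card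

lemma sum_exp_cnt (R : Finset γ) (T : Finset V) (l : ℝ) :
    ∑ g : γ → V, Real.exp (l * cnt R T g)
      = ((Fintype.card V - T.card : ℝ) + T.card * Real.exp l) ^ R.card
        * (Fintype.card V : ℝ) ^ (Fintype.card γ - R.card) := by
  have hcnt : ∀ g : γ → V, (cnt R T g : ℝ)
      = ∑ e : γ, (if e ∈ R ∧ g e ∈ T then (1:ℝ) else 0) := by
    intro g
    rw [cnt, show (R.filter fun e => g e ∈ T)
        = Finset.univ.filter (fun e => e ∈ R ∧ g e ∈ T) from by ext e; simp]
    rw [Finset.card_filter]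
    push_cast
    rfl
  have step1 : ∀ g : γ → V, Real.exp (l * cnt R T g)
      = ∏ e : γ, (if e ∈ R ∧ g e ∈ T then Real.exp l else 1) := by
    intro g
    rw [hcnt, Finset.mul_sum, Real.exp_sum]
    refine Finset.prod_congr rfl fun e _ => ?_
    by_cases h : e ∈ R ∧ g e ∈ T <;> simp [h]
  calc ∑ g : γ → V, Real.exp (l * cnt R T g)
      = ∑ g : γ → V, ∏ e : γ, (if e ∈ R ∧ g e ∈ T then Real.exp l else 1) :=
        Finset.sum_congr rfl fun g _ => step1 g
    _ = ∏ e : γ, ∑ v : V, (if e ∈ R ∧ v ∈ T then Real.exp l else 1) :=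
        (Fintype.prod_sum (fun e v => if e ∈ R ∧ v ∈ T then Real.exp l else 1)).symm
    _ = ((Fintype.card V - T.card : ℝ) + T.card * Real.exp l) ^ R.card
        * (Fintype.card V : ℝ) ^ (Fintype.card γ - R.card) := by
        have inner : ∀ e : γ, (∑ v : V, (if e ∈ R ∧ v ∈ T then Real.exp l else 1))
            = if e ∈ R then ((Fintype.card V - T.card : ℝ) + T.card * Real.exp l)
              else (Fintype.card V : ℝ) := by
          intro e
          by_cases h : e ∈ R
          · simp only [h, true_and, if_true]
            have h1 : ∀ v : V, (if v ∈ T then Real.exp l else 1)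
                = (if v ∈ T then Real.exp l - 1 else 0) + 1 := by
              intro v; by_cases hv : v ∈ T <;> simp [hv]
            rw [Finset.sum_congr rfl fun v _ => h1 v, Finset.sum_add_distrib,
              Finset.sum_const, Finset.card_univ]
            rw [Finset.sum_ite_mem, Finset.univ_inter, Finset.sum_const]
            push_cast
            ring
          · simp [h, Finset.card_univ]
        rw [Finset.prod_congr rfl fun e _ => inner e]
        rw [Finset.prod_ite, Finset.prod_const, Finset.prod_const]
        congr 1
        · congr 1
          rw [Finset.filter_univ_mem]
        · rw [show Finset.univ.filter (fun e => e ∉ R) = Rᶜ from by ext e; simp,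
            Finset.card_compl]

end cnt

section tails
variable {γ V : Type*} [Fintype γ] [Fintype V]

lemma markov_count (w : (γ → V) → ℝ) (hw : ∀ g, 0 ≤ w g) (a : ℝ)
    (P : (γ → V) → Prop) (hP : ∀ g, P g → a ≤ w g) :
    ((Finset.univ.filter P).card : ℝ) * a ≤ ∑ g : γ → V, w g := by
  calc ((Finset.univ.filter P).card : ℝ) * a
      = ∑ _g ∈ Finset.univ.filter P, a := by rw [Finset.sum_const, nsmul_eq_mul]
    _ ≤ ∑ g ∈ Finset.univ.filter P, w g :=
        Finset.sum_le_sum fun g hg => hP g (Finset.mem_filter.mp hg).2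
    _ ≤ ∑ g : γ → V, w g :=
        Finset.sum_le_sum_of_subset_of_nonneg (Finset.filter_subset _ _)
          (fun g _ _ => hw g)

lemma tail_up (R : Finset γ) (T : Finset V) {l θ : ℝ}
    (hV : 0 < Fintype.card V) (h0 : 0 ≤ l) (h2 : l ≤ 1/2) :
    ((Finset.univ.filter fun g : γ → V =>
        (T.card / Fintype.card V : ℝ) * R.card + θ * R.card ≤ (cnt R T g : ℝ)).card : ℝ)
      ≤ (Fintype.card V : ℝ) ^ (Fintype.card γ)
        * Real.exp ((R.card : ℝ) * (l * (2 * (T.card / Fintype.card V) * l - θ))) := by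
  set M := (Fintype.card V : ℝ) with hMdef
  set p := (T.card / Fintype.card V : ℝ) with hpdef
  set N := (R.card : ℝ) with hNdef
  have hM : (0:ℝ) < M := by rw [hMdef]; exact_mod_cast hV
  have ht : (T.card : ℝ) ≤ M := by rw [hMdef]; exact_mod_cast Finset.card_le_univ T
  have htn : (0:ℝ) ≤ (T.card : ℝ) := Nat.cast_nonneg _
  have htp : (T.card : ℝ) = p * M := by rw [hpdef, hMdef]; field_simp
  have hNn : (0:ℝ) ≤ N := Nat.cast_nonneg _
  have markov := markov_count (fun g => Real.exp (l * cnt R T g))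
    (fun g => (Real.exp_pos _).le) (Real.exp (l * (p * N + θ * N)))
    (fun g : γ → V => p * N + θ * N ≤ (cnt R T g : ℝ))
    (fun g hg => Real.exp_le_exp.mpr (mul_le_mul_of_nonneg_left hg h0))
  rw [sum_exp_cnt] at markov
  -- bound the base
  have hbase : (M - T.card) + T.card * Real.exp l ≤ M * Real.exp (p * (l + 2 * l ^ 2)) := by
    have h1 : Real.exp l ≤ 1 + l + 2 * l ^ 2 := exp_le_quad h0 h2
    have h2' : (M - T.card) + T.card * Real.exp l ≤ M * (1 + p * (l + 2 * l ^ 2)) := by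
      have := mul_le_mul_of_nonneg_left h1 htn
      nlinarith [this]
    have h3 : (1 : ℝ) + p * (l + 2 * l ^ 2) ≤ Real.exp (p * (l + 2 * l ^ 2)) := by
      have := Real.add_one_le_exp (p * (l + 2 * l ^ 2)); linarith
    calc (M - T.card) + T.card * Real.exp l ≤ M * (1 + p * (l + 2 * l ^ 2)) := h2'
      _ ≤ M * Real.exp (p * (l + 2 * l ^ 2)) := by
          exact mul_le_mul_of_nonneg_left h3 hM.le
  have hbase0 : (0:ℝ) ≤ (M - T.card) + T.card * Real.exp l := by
    have := Real.exp_pos l; nlinarith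
  have hpow : ((M - T.card) + T.card * Real.exp l) ^ R.card * M ^ (Fintype.card γ - R.card)
      ≤ M ^ (Fintype.card γ) * Real.exp (N * (p * (l + 2 * l ^ 2))) := by
    have h1 : ((M - T.card) + T.card * Real.exp l) ^ R.card
        ≤ (M * Real.exp (p * (l + 2 * l ^ 2))) ^ R.card :=
      pow_le_pow_left₀ hbase0 hbase _
    have h2' : (M * Real.exp (p * (l + 2 * l ^ 2))) ^ R.card
        = M ^ R.card * Real.exp (N * (p * (l + 2 * l ^ 2))) := by
      rw [mul_pow, ← Real.exp_nat_mul, hNdef]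
    have h3 : M ^ R.card * M ^ (Fintype.card γ - R.card) = M ^ (Fintype.card γ) := by
      rw [← pow_add, Nat.add_sub_cancel' (by
        simpa using Finset.card_le_univ R : R.card ≤ Fintype.card γ)]
    calc ((M - T.card) + T.card * Real.exp l) ^ R.card * M ^ (Fintype.card γ - R.card)
        ≤ (M * Real.exp (p * (l + 2 * l ^ 2))) ^ R.card * M ^ (Fintype.card γ - R.card) := by
          apply mul_le_mul_of_nonneg_right h1 (by positivity)
      _ = M ^ (Fintype.card γ) * Real.exp (N * (p * (l + 2 * l ^ 2))) := by
          rw [h2']; rw [mul_right_comm, h3]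
  have key : ((Finset.univ.filter fun g : γ → V =>
      p * N + θ * N ≤ (cnt R T g : ℝ)).card : ℝ) * Real.exp (l * (p * N + θ * N))
      ≤ M ^ (Fintype.card γ) * Real.exp (N * (p * (l + 2 * l ^ 2))) :=
    le_trans markov hpow
  have hexp : (0:ℝ) < Real.exp (l * (p * N + θ * N)) := Real.exp_pos _
  rw [← le_div_iff₀ hexp] at key
  calc ((Finset.univ.filter fun g : γ → V =>
      p * N + θ * N ≤ (cnt R T g : ℝ)).card : ℝ)
      ≤ M ^ (Fintype.card γ) * Real.exp (N * (p * (l + 2 * l ^ 2)))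
        / Real.exp (l * (p * N + θ * N)) := key
    _ = M ^ (Fintype.card γ) * Real.exp (N * (l * (2 * p * l - θ))) := by
        rw [mul_div_assoc, ← Real.exp_sub]
        congr 2
        ring

lemma tail_lo (R : Finset γ) (T : Finset V) {l θ : ℝ}
    (hV : 0 < Fintype.card V) (h0 : 0 ≤ l) :
    ((Finset.univ.filter fun g : γ → V =>
        (cnt R T g : ℝ) ≤ (T.card / Fintype.card V : ℝ) * R.card - θ * R.card).card : ℝ)
      ≤ (Fintype.card V : ℝ) ^ (Fintype.card γ)
        * Real.exp ((R.card : ℝ) * (l * (2 * (T.card / Fintype.card V) * l - θ))) := by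
  set M := (Fintype.card V : ℝ) with hMdef
  set p := (T.card / Fintype.card V : ℝ) with hpdef
  set N := (R.card : ℝ) with hNdef
  have hM : (0:ℝ) < M := by rw [hMdef]; exact_mod_cast hV
  have ht : (T.card : ℝ) ≤ M := by rw [hMdef]; exact_mod_cast Finset.card_le_univ T
  have htn : (0:ℝ) ≤ (T.card : ℝ) := Nat.cast_nonneg _
  have hNn : (0:ℝ) ≤ N := Nat.cast_nonneg _
  have hp0 : 0 ≤ p := by rw [hpdef]; positivity
  have markov := markov_count (fun g => Real.exp (-l * cnt R T g))
    (fun g => (Real.exp_pos _).le) (Real.exp (-l * (p * N - θ * N)))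
    (fun g : γ → V => (cnt R T g : ℝ) ≤ p * N - θ * N)
    (fun g hg => Real.exp_le_exp.mpr (by nlinarith [hg]))
  rw [sum_exp_cnt] at markov
  have hbase : (M - T.card) + T.card * Real.exp (-l) ≤ M * Real.exp (p * (l ^ 2 - l)) := by
    have h1 : Real.exp (-l) ≤ 1 - l + l ^ 2 := exp_neg_le_quad h0
    have h2' : (M - T.card) + T.card * Real.exp (-l) ≤ M * (1 + p * (l ^ 2 - l)) := by
      have := mul_le_mul_of_nonneg_left h1 htn
      have htp : (T.card : ℝ) = p * M := by rw [hpdef, hMdef]; field_simp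
      nlinarith [this]
    have h3 : (1 : ℝ) + p * (l ^ 2 - l) ≤ Real.exp (p * (l ^ 2 - l)) := by
      have := Real.add_one_le_exp (p * (l ^ 2 - l)); linarith
    calc (M - T.card) + T.card * Real.exp (-l) ≤ M * (1 + p * (l ^ 2 - l)) := h2'
      _ ≤ M * Real.exp (p * (l ^ 2 - l)) := mul_le_mul_of_nonneg_left h3 hM.le
  have hbase0 : (0:ℝ) ≤ (M - T.card) + T.card * Real.exp (-l) := by
    have := Real.exp_pos (-l); nlinarith
  have hpow : ((M - T.card) + T.card * Real.exp (-l)) ^ R.card * M ^ (Fintype.card γ - R.card)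
      ≤ M ^ (Fintype.card γ) * Real.exp (N * (p * (l ^ 2 - l))) := by
    have h1 : ((M - T.card) + T.card * Real.exp (-l)) ^ R.card
        ≤ (M * Real.exp (p * (l ^ 2 - l))) ^ R.card :=
      pow_le_pow_left₀ hbase0 hbase _
    have h2' : (M * Real.exp (p * (l ^ 2 - l))) ^ R.card
        = M ^ R.card * Real.exp (N * (p * (l ^ 2 - l))) := by
      rw [mul_pow, ← Real.exp_nat_mul, hNdef]
    have h3 : M ^ R.card * M ^ (Fintype.card γ - R.card) = M ^ (Fintype.card γ) := by
      rw [← pow_add, Nat.add_sub_cancel' (by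
        simpa using Finset.card_le_univ R : R.card ≤ Fintype.card γ)]
    calc ((M - T.card) + T.card * Real.exp (-l)) ^ R.card * M ^ (Fintype.card γ - R.card)
        ≤ (M * Real.exp (p * (l ^ 2 - l))) ^ R.card * M ^ (Fintype.card γ - R.card) :=
          mul_le_mul_of_nonneg_right h1 (by positivity)
      _ = M ^ (Fintype.card γ) * Real.exp (N * (p * (l ^ 2 - l))) := by
          rw [h2']; rw [mul_right_comm, h3]
  have key := le_trans markov hpow
  have hexp : (0:ℝ) < Real.exp (-l * (p * N - θ * N)) := Real.exp_pos _
  rw [← le_div_iff₀ hexp] at key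
  calc ((Finset.univ.filter fun g : γ → V =>
      (cnt R T g : ℝ) ≤ p * N - θ * N).card : ℝ)
      ≤ M ^ (Fintype.card γ) * Real.exp (N * (p * (l ^ 2 - l)))
        / Real.exp (-l * (p * N - θ * N)) := key
    _ = M ^ (Fintype.card γ) * Real.exp (N * (l * (p * l - θ))) := by
        rw [mul_div_assoc, ← Real.exp_sub]
        congr 2
        ring
    _ ≤ M ^ (Fintype.card γ) * Real.exp (N * (l * (2 * p * l - θ))) := by
        apply mul_le_mul_of_nonneg_left _ (by positivity)
        apply Real.exp_le_exp.mpr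
        nlinarith [mul_nonneg (mul_nonneg hNn h0) (mul_nonneg hp0 h0)]

end tails

noncomputable def Tset (M t i : ℕ) : Finset (Fin M) :=
  Finset.univ.filter fun v => i * t ≤ (v : ℕ) ∧ (v : ℕ) < (i + 1) * t

lemma Tset_card {M t i : ℕ} (h : (i + 1) * t ≤ M) : (Tset M t i).card = t := by
  have key : (Tset M t i).card = (Finset.Ico (i * t) ((i + 1) * t)).card := by
    refine Finset.card_bij (fun v _ => (v : ℕ)) ?_ ?_ ?_
    · intro v hv; simp only [Tset, Finset.mem_filter] at hv
      simp [Finset.mem_Ico, hv.2.1, hv.2.2]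
    · intro a _ b _ hab; exact Fin.val_injective hab
    · intro b hb; simp only [Finset.mem_Ico] at hb
      exact ⟨⟨b, lt_of_lt_of_le hb.2 h⟩, by simp [Tset, hb.1, hb.2], rfl⟩
  rw [key, Nat.card_Ico, Nat.succ_mul, Nat.add_sub_cancel_left]

lemma Tset_disjoint {M t i j : ℕ} (h : i ≠ j) : Disjoint (Tset M t i) (Tset M t j) := by
  rw [Finset.disjoint_left]
  intro v hvi hvj
  simp only [Tset, Finset.mem_filter] at hvi hvj
  rcases lt_or_gt_of_ne h with hij | hij
  · have : (i + 1) * t ≤ j * t := Nat.mul_le_mul_right _ hij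
    omega
  · have : (j + 1) * t ≤ i * t := Nat.mul_le_mul_right _ hij
    omega


/-- an ε-regular pair of density `d` splits into `⌊K⌋` edge-disjoint spanning
subgraphs, each `[ε, 4ε/K]`-regular of density between `(d−2ε)/K` and `(d+2ε)/K`. -/
theorem split_regular_pair_into_regular_subgraphs :
    ∃ c : ℝ, 0 < c ∧ c < 1 ∧
    ∀ d₀ : ℝ, 0 < d₀ → d₀ ≤ c →
    ∃ ε₀ : ℝ, 0 < ε₀ ∧
    ∀ ε : ℝ, 0 < ε → ε ≤ ε₀ →
    ∀ K : ℝ, 1 ≤ K →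
    ∃ m₀ : ℕ, ∀ d : ℝ, d₀ ≤ d →
    ∀ m : ℕ, m₀ ≤ m →
    ∀ (α β : Type) [Fintype α] [Fintype β],
      Fintype.card α = m → Fintype.card β = m →
    ∀ E : Finset (α × β),
      IsRegularBip E ε ε → densBip E Finset.univ Finset.univ = d →
      ∃ S : Fin ⌊K⌋₊ → Finset (α × β),
        (∀ i, S i ⊆ E) ∧
        (∀ i j, i ≠ j → Disjoint (S i) (S j)) ∧
        (∀ i, IsRegularBip (S i) ε (4 * ε / K)) ∧
        (∀ i, (d - 2*ε)/K ≤ densBip (S i) Finset.univ Finset.univ ∧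
              densBip (S i) Finset.univ Finset.univ ≤ (d + 2*ε)/K) := by
  refine ⟨1/2, by norm_num, by norm_num, ?_⟩
  intro d₀ hd₀ hd₀c
  refine ⟨d₀/2, by positivity, ?_⟩
  intro ε hε hεd K hK
  have hK0 : (0:ℝ) < K := lt_of_lt_of_le one_pos hK
  have hε1 : ε ≤ 1 := by linarith
  set k := ⌊K⌋₊ with hkdef
  have hk1 : 1 ≤ k := Nat.le_floor (by exact_mod_cast hK)
  have hkR : (1:ℝ) ≤ (k:ℝ) := by exact_mod_cast hk1
  have hkK : (k:ℝ) ≤ K := Nat.floor_le hK0.le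
  set M := ⌈K/ε⌉₊ with hMdef
  have hMc : K/ε ≤ (M:ℝ) := Nat.le_ceil _
  have hKM : K ≤ (M:ℝ) := le_trans (by rw [le_div_iff₀ hε]; nlinarith) hMc
  have hM1R : (1:ℝ) ≤ (M:ℝ) := le_trans hK hKM
  have hM0R : (0:ℝ) < M := lt_of_lt_of_le one_pos hM1R
  have hM0 : 0 < M := by exact_mod_cast hM0R
  set t := ⌊(M:ℝ)/K⌋₊ with htdef
  have ht1 : 1 ≤ t := Nat.le_floor (by
    rw [Nat.cast_one, le_div_iff₀ hK0]; linarith)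
  have ht0R : (0:ℝ) < t := by exact_mod_cast ht1
  have htle : (t:ℝ) ≤ (M:ℝ)/K := Nat.floor_le (by positivity)
  have htlt : (M:ℝ)/K < t + 1 := Nat.lt_floor_add_one _
  have hktM : ((k * t : ℕ) : ℝ) ≤ (M:ℝ) := by
    push_cast
    calc (k:ℝ) * t ≤ K * ((M:ℝ)/K) :=
          mul_le_mul hkK htle ht0R.le hK0.le
      _ = M := by field_simp
  set p := (t:ℝ)/M with hpdef
  have hp0 : 0 < p := div_pos ht0R hM0R
  have hpK : p ≤ 1/K := by
    have heq : (M:ℝ)/K/(M:ℝ) = 1/K := by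
      rw [div_div, mul_comm, ← div_div, div_self (ne_of_gt hM0R)]
    rw [hpdef, ← heq]
    gcongr
  have hpKl : 1/K - 1/(M:ℝ) ≤ p := by
    rw [hpdef]
    have hMlt : (M:ℝ) < ((t:ℝ)+1)*K := by rw [div_lt_iff₀ hK0] at htlt; nlinarith
    rw [div_sub_div _ _ (ne_of_gt hK0) (ne_of_gt hM0R), div_le_div_iff₀ (by positivity) hM0R]
    nlinarith [hMlt, hM0R]
  set θ := ε^3/K with hθdef
  have hθ0 : 0 < θ := by positivity
  set l := min (1/2) (θ/(4*p)) with hldef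
  have hl0 : 0 < l := lt_min (by norm_num) (by positivity)
  have hl2 : l ≤ 1/2 := min_le_left _ _
  have hrate : 2*p*l - θ ≤ -(θ/2) := by
    have h1 : l ≤ θ/(4*p) := min_le_right _ _
    have h2 : 2*p*l ≤ 2*p*(θ/(4*p)) := by
      have := mul_le_mul_of_nonneg_left h1 (le_of_lt (by positivity : (0:ℝ) < 2*p))
      linarith
    have h3 : 2*p*(θ/(4*p)) = θ/2 := by
      calc 2*p*(θ/(4*p)) = (2*p*θ)/(4*p) := by ring
        _ = θ/2 := by rw [div_eq_div_iff (by positivity) (by norm_num)]; ring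
    linarith
  set ρ := l*θ/2 with hρdef
  have hρ0 : 0 < ρ := by positivity
  set c₂ := d₀/2*ε^2 with hc₂def
  have hc₂0 : 0 < c₂ := by positivity
  set L := Real.log (2*k) + Real.log 4 + 1 with hLdef
  clear_value L ρ c₂ l θ p t M k
  refine ⟨max 1 ⌈L/(ρ*c₂)⌉₊, ?_⟩
  intro d hd m hm α β _i1 _i2 hcα hcβ E hreg hdens
  have hm1 : 1 ≤ m := le_trans (le_max_left _ _) hm
  have hmR : (0:ℝ) < m := by exact_mod_cast hm1
  have hmR1 : (1:ℝ) ≤ m := by exact_mod_cast hm1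
  have hd0 : 0 < d := lt_of_lt_of_le hd₀ hd
  -- the numeric smallness bound
  have hsmall : (k:ℝ) * (2^m * 2^m) * (2 * Real.exp (-(ρ * (c₂ * (m:ℝ)^2)))) < 1 := by
    have hceil : (⌈L/(ρ*c₂)⌉₊ : ℕ) ≤ m := le_trans (le_max_right _ _) hm
    have hLm : L/(ρ*c₂) ≤ (m:ℝ) := le_trans (Nat.le_ceil _) (by exact_mod_cast hceil)
    have hL : L ≤ ρ*c₂*m := by
      rw [div_le_iff₀ (by positivity)] at hLm; linarith
    have hlogk : 0 ≤ Real.log (2*k) := Real.log_nonneg (by linarith)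
    have hlog4 : 0 ≤ Real.log 4 := Real.log_nonneg (by norm_num)
    have hlogeq : Real.log ((2*k:ℝ)*4^m) = Real.log (2*(k:ℝ)) + m*Real.log 4 := by
      rw [Real.log_mul (by positivity) (by positivity), Real.log_pow]
    have hloglt : Real.log ((2*k:ℝ)*4^m) < ρ*(c₂*(m:ℝ)^2) := by
      rw [hlogeq]
      have e1 : 0 ≤ Real.log (2*(k:ℝ)) * ((m:ℝ) - 1) := mul_nonneg hlogk (by linarith)
      have h1 := mul_le_mul_of_nonneg_right hL hmR.le
      have h2 : ρ*c₂*(m:ℝ)*(m:ℝ) = ρ*(c₂*(m:ℝ)^2) := by ring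
      rw [h2] at h1
      have h3 : L*(m:ℝ) = Real.log (2*(k:ℝ))*(m:ℝ) + Real.log 4*(m:ℝ) + (m:ℝ) := by
        rw [hLdef]; push_cast; ring
      linarith [e1, h1, h3]
    have hexp : (2*(k:ℝ))*4^m < Real.exp (ρ*(c₂*(m:ℝ)^2)) := by
      have hpos : (0:ℝ) < (2*(k:ℝ))*4^m := by positivity
      calc (2*(k:ℝ))*4^m = Real.exp (Real.log ((2*(k:ℝ))*4^m)) := (Real.exp_log hpos).symm
        _ < Real.exp (ρ*(c₂*(m:ℝ)^2)) := Real.exp_lt_exp.mpr hloglt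
    have h4 : (2:ℝ)^m*2^m = 4^m := by rw [← mul_pow]; norm_num
    rw [h4]
    have h5 : (2*(k:ℝ)*4^m) * Real.exp (-(ρ * (c₂ * (m:ℝ)^2)))
        < Real.exp (ρ * (c₂ * (m:ℝ)^2)) * Real.exp (-(ρ * (c₂ * (m:ℝ)^2))) :=
      mul_lt_mul_of_pos_right hexp (Real.exp_pos _)
    have h6 : Real.exp (ρ * (c₂ * (m:ℝ)^2)) * Real.exp (-(ρ * (c₂ * (m:ℝ)^2))) = 1 := by
      rw [← Real.exp_add]; simp
    rw [h6] at h5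
    calc (k:ℝ) * 4^m * (2 * Real.exp (-(ρ * (c₂ * (m:ℝ)^2))))
        = (2*(k:ℝ)*4^m) * Real.exp (-(ρ * (c₂ * (m:ℝ)^2))) := by ring
      _ < 1 := h5
  -- counting setup
  have hcard_pair : Fintype.card (α × β) = m * m := by
    rw [Fintype.card_prod, hcα, hcβ]
  have hεm : (0:ℝ) < ε * m := by positivity
  set R : Finset α → Finset β → Finset (α × β) :=
    fun X Y => E.filter fun e => e.1 ∈ X ∧ e.2 ∈ Y with hRdef
  have heB : ∀ (X : Finset α) (Y : Finset β), (eBip E X Y : ℝ) = ((R X Y).card : ℝ) := by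
    intro X Y
    rw [hRdef, eBip]
  have hNle : ∀ (X : Finset α) (Y : Finset β), ((R X Y).card : ℝ) ≤ (m:ℝ) * m := by
    intro X Y
    have h1 : (R X Y).card ≤ E.card := Finset.card_filter_le _ _
    have h2 : E.card ≤ m * m := by
      have := Finset.card_le_univ E
      rwa [hcard_pair] at this
    exact_mod_cast le_trans h1 h2
  have hNge : ∀ (X : Finset α) (Y : Finset β), ε*m ≤ (X.card:ℝ) → ε*m ≤ (Y.card:ℝ) →
      c₂ * (m:ℝ)^2 ≤ ((R X Y).card : ℝ) := by
    intro X Y hX hY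
    have hXp : (0:ℝ) < X.card := lt_of_lt_of_le hεm hX
    have hYp : (0:ℝ) < Y.card := lt_of_lt_of_le hεm hY
    have hr := hreg X Y (by rw [hcα]; exact hX) (by rw [hcβ]; exact hY)
    rw [hdens] at hr
    have hlow : d - ε < densBip E X Y := by
      have := abs_lt.mp hr; linarith [this.1]
    have hdx : densBip E X Y = ((R X Y).card : ℝ) / ((X.card:ℝ) * Y.card) := by
      rw [densBip, heB]
    rw [hdx] at hlow
    have h1 : (d - ε) * ((X.card:ℝ) * Y.card) ≤ ((R X Y).card:ℝ) :=
      ((lt_div_iff₀ (by positivity)).mp hlow).le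
    have hdε : d₀/2 ≤ d - ε := by linarith
    have hXY : (ε*m) * (ε*m) ≤ (X.card:ℝ) * Y.card :=
      mul_le_mul hX hY hεm.le hXp.le
    calc c₂*(m:ℝ)^2 = (d₀/2)*((ε*m)*(ε*m)) := by rw [hc₂def]; ring
      _ ≤ (d-ε)*((X.card:ℝ)*Y.card) :=
          mul_le_mul hdε hXY (by positivity) (by linarith)
      _ ≤ ((R X Y).card:ℝ) := h1
  have hθN : ∀ (X : Finset α) (Y : Finset β), ε*m ≤ (X.card:ℝ) → ε*m ≤ (Y.card:ℝ) →
      θ * ((R X Y).card:ℝ) ≤ ε/K * ((X.card:ℝ) * Y.card) := by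
    intro X Y hX hY
    have hXp : (0:ℝ) < X.card := lt_of_lt_of_le hεm hX
    have h1 : ((R X Y).card:ℝ) ≤ (m:ℝ)*m := hNle X Y
    have hXY : (ε*m) * (ε*m) ≤ (X.card:ℝ) * Y.card :=
      mul_le_mul hX hY hεm.le hXp.le
    calc θ * ((R X Y).card:ℝ) = (ε/K) * (ε^2 * ((R X Y).card:ℝ)) := by rw [hθdef]; ring
      _ ≤ (ε/K) * ((X.card:ℝ)*Y.card) := by
          apply mul_le_mul_of_nonneg_left _ (by positivity)
          calc ε^2 * ((R X Y).card:ℝ) ≤ ε^2*((m:ℝ)*m) :=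
                mul_le_mul_of_nonneg_left h1 (by positivity)
            _ = (ε*m)*(ε*m) := by ring
            _ ≤ (X.card:ℝ)*Y.card := hXY
  have hMfin : 0 < Fintype.card (Fin M) := by simp [Fintype.card_fin]; omega
  have hgood : ∃ g : α × β → Fin M, ∀ i : ℕ, i < k → ∀ (X : Finset α) (Y : Finset β),
      ε*m ≤ (X.card:ℝ) → ε*m ≤ (Y.card:ℝ) →
      |(cnt (R X Y) (Tset M t i) g : ℝ) - p * ((R X Y).card:ℝ)|
        ≤ ε/K * ((X.card:ℝ) * Y.card) := by
    by_contra hcon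
    push_neg at hcon
    set A : Finset (ℕ × Finset α × Finset β) :=
      (Finset.range k) ×ˢ ((Finset.univ : Finset α).powerset ×ˢ
        (Finset.univ : Finset β).powerset) with hA
    set Bad : ℕ × Finset α × Finset β → Finset ((α × β) → Fin M) := fun z =>
      Finset.univ.filter fun g =>
        (ε*m ≤ (z.2.1.card:ℝ) ∧ ε*m ≤ (z.2.2.card:ℝ)) ∧
        ε/K * ((z.2.1.card:ℝ) * z.2.2.card) <
          |(cnt (R z.2.1 z.2.2) (Tset M t z.1) g : ℝ) - p * ((R z.2.1 z.2.2).card:ℝ)|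
      with hBad
    have hcover : (Finset.univ : Finset ((α × β) → Fin M)) ⊆ A.biUnion Bad := by
      intro g _
      obtain ⟨i, hik, X, Y, hX, hY, habs⟩ := hcon g
      refine Finset.mem_biUnion.mpr ⟨(i, X, Y), ?_, ?_⟩
      · simp only [hA, Finset.mem_product, Finset.mem_range, Finset.mem_powerset]
        exact ⟨hik, Finset.subset_univ _, Finset.subset_univ _⟩
      · simp only [hBad, Finset.mem_filter, Finset.mem_univ, true_and]
        exact ⟨⟨hX, hY⟩, habs⟩
    have hbound : ∀ z ∈ A, ((Bad z).card : ℝ)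
        ≤ 2 * (M:ℝ)^(m*m) * Real.exp (-(ρ * (c₂ * (m:ℝ)^2))) := by
      rintro ⟨i, X, Y⟩ hzA
      by_cases hsz : ε*m ≤ (X.card:ℝ) ∧ ε*m ≤ (Y.card:ℝ)
      · have hik : i < k := by
          simp only [hA, Finset.mem_product, Finset.mem_range] at hzA
          exact hzA.1
        have hTcard : (Tset M t i).card = t := Tset_card (by
          have h1 : (i+1) * t ≤ k * t := Nat.mul_le_mul_right _ (by omega)
          have h2 : (k*t:ℕ) ≤ M := by exact_mod_cast hktM
          omega)
        have htu := tail_up (V := Fin M) (R X Y) (Tset M t i) (l := l) (θ := θ)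
          hMfin hl0.le hl2
        have htl := tail_lo (V := Fin M) (R X Y) (Tset M t i) (l := l) (θ := θ)
          hMfin hl0.le
        simp only [hTcard, Fintype.card_fin, hcard_pair, ← hpdef] at htu htl
        set Np := ((R X Y).card : ℝ) with hNp
        obtain ⟨Up, htu', hUmem⟩ : ∃ U : Finset ((α × β) → Fin M),
            ((U.card:ℝ) ≤ (M:ℝ)^(m*m) * Real.exp (Np * (l * (2*p*l - θ)))) ∧
            (∀ g : (α × β) → Fin M, p * Np + θ * Np ≤ (cnt (R X Y) (Tset M t i) g : ℝ)
              → g ∈ U) :=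
          ⟨_, htu, fun g hgp => by
            simp only [Finset.mem_filter, Finset.mem_univ, true_and]; exact hgp⟩
        obtain ⟨Lo, htl', hLmem⟩ : ∃ U : Finset ((α × β) → Fin M),
            ((U.card:ℝ) ≤ (M:ℝ)^(m*m) * Real.exp (Np * (l * (2*p*l - θ)))) ∧
            (∀ g : (α × β) → Fin M, (cnt (R X Y) (Tset M t i) g : ℝ) ≤ p * Np - θ * Np
              → g ∈ U) :=
          ⟨_, htl, fun g hgp => by
            simp only [Finset.mem_filter, Finset.mem_univ, true_and]; exact hgp⟩
        have hsub : Bad (i,X,Y) ⊆ Up ∪ Lo := by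
          intro g hg
          simp only [hBad, Finset.mem_filter, Finset.mem_univ, true_and] at hg
          obtain ⟨_, habs⟩ := hg
          have hθN' := hθN X Y hsz.1 hsz.2
          rcases abs_cases ((cnt (R X Y) (Tset M t i) g : ℝ) - p * Np) with
            ⟨he, _⟩ | ⟨he, _⟩
          · refine Finset.mem_union_left _ (hUmem g ?_)
            rw [he] at habs; linarith
          · refine Finset.mem_union_right _ (hLmem g ?_)
            rw [he] at habs; linarith
        have hexpmono : Real.exp (Np * (l * (2*p*l - θ)))
            ≤ Real.exp (-(ρ * (c₂ * (m:ℝ)^2))) := by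
          apply Real.exp_le_exp.mpr
          have hN' : c₂ * (m:ℝ)^2 ≤ Np := hNge X Y hsz.1 hsz.2
          have hNp0 : (0:ℝ) ≤ Np := Nat.cast_nonneg _
          have h1 : l * (2*p*l - θ) ≤ -ρ := by
            have := mul_le_mul_of_nonneg_left hrate hl0.le
            rw [hρdef]; linarith
          have h2 : Np * (l * (2*p*l - θ)) ≤ Np * (-ρ) :=
            mul_le_mul_of_nonneg_left h1 hNp0
          have h3 : ρ * (c₂ * (m:ℝ)^2) ≤ ρ * Np :=
            mul_le_mul_of_nonneg_left hN' hρ0.le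
          have h4 : Np * (-ρ) = -(ρ * Np) := by ring
          linarith
        have hcard : ((Bad (i,X,Y)).card : ℝ) ≤ (Up.card : ℝ) + (Lo.card : ℝ) := by
          have := le_trans (Finset.card_le_card hsub) (Finset.card_union_le Up Lo)
          exact_mod_cast this
        calc ((Bad (i,X,Y)).card : ℝ) ≤ (Up.card : ℝ) + (Lo.card : ℝ) := hcard
          _ ≤ (M:ℝ)^(m*m) * Real.exp (Np * (l * (2*p*l - θ)))
              + (M:ℝ)^(m*m) * Real.exp (Np * (l * (2*p*l - θ))) := add_le_add htu' htl'
          _ = 2 * ((M:ℝ)^(m*m) * Real.exp (Np * (l * (2*p*l - θ)))) := by ring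
          _ ≤ 2 * ((M:ℝ)^(m*m) * Real.exp (-(ρ * (c₂ * (m:ℝ)^2)))) := by
              apply mul_le_mul_of_nonneg_left _ (by norm_num)
              exact mul_le_mul_of_nonneg_left hexpmono (by positivity)
          _ = 2 * (M:ℝ)^(m*m) * Real.exp (-(ρ * (c₂ * (m:ℝ)^2))) := by ring
      · have hempty : Bad (i,X,Y) = ∅ := by
          rw [hBad]
          apply Finset.filter_false_of_mem
          intro g _
          intro h
          exact hsz h.1
        rw [hempty]
        simp only [Finset.card_empty, Nat.cast_zero]
        positivity
    have huniv : ((Finset.univ : Finset ((α × β) → Fin M)).card : ℝ) = (M:ℝ)^(m*m) := by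
      rw [Finset.card_univ, Fintype.card_fun, Fintype.card_fin, hcard_pair]
      push_cast; ring
    have hAcard : ((A.card : ℕ) : ℝ) = (k:ℝ) * (2^m * 2^m) := by
      rw [hA, Finset.card_product, Finset.card_product, Finset.card_range,
        Finset.card_powerset, Finset.card_powerset, Finset.card_univ, Finset.card_univ,
        hcα, hcβ]
      push_cast; ring
    have hchain : (M:ℝ)^(m*m) ≤ (k:ℝ) * (2^m * 2^m)
        * (2 * (M:ℝ)^(m*m) * Real.exp (-(ρ * (c₂ * (m:ℝ)^2)))) := by
      have h1 : ((Finset.univ : Finset ((α × β) → Fin M)).card : ℝ)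
          ≤ ∑ z ∈ A, ((Bad z).card : ℝ) := by
        have h2 := Finset.card_le_card hcover
        have h3 := Finset.card_biUnion_le (s := A) (t := Bad)
        have h4 : (Finset.univ : Finset ((α × β) → Fin M)).card
            ≤ ∑ z ∈ A, (Bad z).card := le_trans h2 h3
        exact_mod_cast h4
      have h5 : ∑ z ∈ A, ((Bad z).card : ℝ)
          ≤ ∑ _z ∈ A, (2 * (M:ℝ)^(m*m) * Real.exp (-(ρ * (c₂ * (m:ℝ)^2)))) :=
        Finset.sum_le_sum hbound
      rw [Finset.sum_const, nsmul_eq_mul, hAcard] at h5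
      rw [huniv] at h1
      calc (M:ℝ)^(m*m) ≤ ∑ z ∈ A, ((Bad z).card : ℝ) := h1
        _ ≤ (k:ℝ) * (2^m * 2^m) * (2 * (M:ℝ)^(m*m) * Real.exp (-(ρ * (c₂ * (m:ℝ)^2)))) := h5
    have hMpow : (0:ℝ) < (M:ℝ)^(m*m) := by positivity
    have : (M:ℝ)^(m*m) < (M:ℝ)^(m*m) := by
      calc (M:ℝ)^(m*m) ≤ (k:ℝ) * (2^m * 2^m)
            * (2 * (M:ℝ)^(m*m) * Real.exp (-(ρ * (c₂ * (m:ℝ)^2)))) := hchain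
        _ = ((k:ℝ) * (2^m * 2^m) * (2 * Real.exp (-(ρ * (c₂ * (m:ℝ)^2))))) * (M:ℝ)^(m*m) := by
            ring
        _ < 1 * (M:ℝ)^(m*m) := mul_lt_mul_of_pos_right hsmall hMpow
        _ = (M:ℝ)^(m*m) := one_mul _
    exact lt_irrefl _ this
  obtain ⟨g, hg⟩ := hgood
  have hcnt_eq : ∀ (i : ℕ) (X : Finset α) (Y : Finset β),
      (eBip (E.filter fun e => g e ∈ Tset M t i) X Y : ℝ)
        = (cnt (R X Y) (Tset M t i) g : ℝ) := by
    intro i X Y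
    rw [eBip, cnt, hRdef]
    norm_cast
    apply congrArg Finset.card
    ext e
    simp only [Finset.mem_filter]
    tauto
  have hucα : ε*m ≤ ((Finset.univ : Finset α).card : ℝ) := by
    rw [Finset.card_univ, hcα]
    have := mul_le_mul_of_nonneg_right hε1 hmR.le
    linarith
  have hucβ : ε*m ≤ ((Finset.univ : Finset β).card : ℝ) := by
    rw [Finset.card_univ, hcβ]
    have := mul_le_mul_of_nonneg_right hε1 hmR.le
    linarith
  have hkey : ∀ (i : ℕ), i < k → ∀ (X : Finset α) (Y : Finset β),
      ε*m ≤ (X.card:ℝ) → ε*m ≤ (Y.card:ℝ) →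
      |densBip (E.filter fun e => g e ∈ Tset M t i) X Y - p * densBip E X Y| ≤ ε/K := by
    intro i hik X Y hX hY
    have hXp : (0:ℝ) < X.card := lt_of_lt_of_le hεm hX
    have hYp : (0:ℝ) < Y.card := lt_of_lt_of_le hεm hY
    have hXY0 : (0:ℝ) < (X.card:ℝ) * Y.card := by positivity
    have h1 := hg i hik X Y hX hY
    have h2 : densBip (E.filter fun e => g e ∈ Tset M t i) X Y - p * densBip E X Y
        = ((cnt (R X Y) (Tset M t i) g : ℝ) - p * ((R X Y).card:ℝ))
          / ((X.card:ℝ) * Y.card) := by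
      rw [densBip, densBip, heB, hcnt_eq]
      field_simp
    rw [h2, abs_div, abs_of_pos hXY0, div_le_iff₀ hXY0]
    exact h1
  have hεK0 : (0:ℝ) < ε/K := by positivity
  have hd1 : d ≤ 1 := by
    rw [← hdens, densBip]
    have he : (eBip E Finset.univ Finset.univ : ℝ)
        ≤ ((Finset.univ : Finset α).card : ℝ) * ((Finset.univ : Finset β).card : ℝ) := by
      rw [heB Finset.univ Finset.univ, Finset.card_univ, Finset.card_univ, hcα, hcβ]
      exact hNle Finset.univ Finset.univ
    exact div_le_one_of_le₀ he (by positivity)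
  refine ⟨fun i => E.filter fun e => g e ∈ Tset M t i.val, ?_, ?_, ?_, ?_⟩
  · intro i; exact Finset.filter_subset _ _
  · intro i j hij
    have hvij : (i:ℕ) ≠ (j:ℕ) := fun h => hij (Fin.ext h)
    rw [Finset.disjoint_left]
    intro e hei hej
    have h1 := (Finset.mem_filter.mp hei).2
    have h2 := (Finset.mem_filter.mp hej).2
    exact Finset.disjoint_left.mp (Tset_disjoint hvij) h1 h2
  · intro i
    intro X Y hX hY
    rw [hcα] at hX
    rw [hcβ] at hY
    have hik : (i:ℕ) < k := i.isLt
    have k1 := hkey i.val hik X Y hX hY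
    have k2 := hkey i.val hik Finset.univ Finset.univ hucα hucβ
    have hregE := hreg X Y (by rw [hcα]; exact hX) (by rw [hcβ]; exact hY)
    have tri1 : |densBip (E.filter fun e => g e ∈ Tset M t i.val) Finset.univ Finset.univ
          - densBip (E.filter fun e => g e ∈ Tset M t i.val) X Y|
        ≤ |densBip (E.filter fun e => g e ∈ Tset M t i.val) Finset.univ Finset.univ
            - p * densBip E Finset.univ Finset.univ|
          + |p * densBip E Finset.univ Finset.univ - p * densBip E X Y|
          + |p * densBip E X Y
              - densBip (E.filter fun e => g e ∈ Tset M t i.val) X Y| := by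
      have t1 := abs_sub_le
        (densBip (E.filter fun e => g e ∈ Tset M t i.val) Finset.univ Finset.univ)
        (p * densBip E Finset.univ Finset.univ)
        (densBip (E.filter fun e => g e ∈ Tset M t i.val) X Y)
      have t2 := abs_sub_le (p * densBip E Finset.univ Finset.univ)
        (p * densBip E X Y)
        (densBip (E.filter fun e => g e ∈ Tset M t i.val) X Y)
      linarith
    have hmid : |p * densBip E Finset.univ Finset.univ - p * densBip E X Y| < p * ε := by
      rw [← mul_sub, abs_mul, abs_of_pos hp0]
      exact mul_lt_mul_of_pos_left hregE hp0
    have h3 : |p * densBip E X Y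
        - densBip (E.filter fun e => g e ∈ Tset M t i.val) X Y| ≤ ε/K := by
      rw [abs_sub_comm]; exact k1
    have hpε : p * ε ≤ ε/K := by
      have := mul_le_mul_of_nonneg_right hpK hε.le
      have h4 : 1/K*ε = ε/K := by ring
      linarith
    have h5 : 4*ε/K = 4*(ε/K) := by ring
    rw [h5]
    linarith
  · intro i
    have hik : (i:ℕ) < k := i.isLt
    have k2 := hkey i.val hik Finset.univ Finset.univ hucα hucβ
    rw [hdens] at k2
    have habs := abs_le.mp k2
    have h1M : 1/(M:ℝ) ≤ ε/K := by
      rw [div_le_div_iff₀ hM0R hK0]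
      have := (div_le_iff₀ hε).mp hMc
      linarith
    have e1 : (1/K - 1/(M:ℝ))*d ≤ p*d := mul_le_mul_of_nonneg_right hpKl hd0.le
    have e2 : d/(M:ℝ) ≤ 1/(M:ℝ) := (div_le_div_iff_of_pos_right hM0R).mpr hd1
    have e3 : p*d ≤ (1/K)*d := mul_le_mul_of_nonneg_right hpK hd0.le
    constructor
    · have expand : (1/K - 1/(M:ℝ))*d = d/K - d/(M:ℝ) := by ring
      have goal1 : (d - 2*ε)/K = d/K - 2*(ε/K) := by ring
      rw [goal1]
      linarith [habs.1]
    · have goal2 : (d + 2*ε)/K = (1/K)*d + 2*(ε/K) := by ring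
      rw [goal2]
      linarith [habs.2]
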